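/- Let the characteristic of K be an odd prime p. If π ∈ K[T] is an irreducible polynomial dividing L_n, then for all m, n ≥ 1 with p ∤ m and p ∤ n one has ord_π(L_{mn}) = ord_π(L_n). -/

import Mathlib

/-- Lemma 2.5 (odd characteristic): if `π` is an irreducible dividing `L_n`, then
for `m, n` coprime to `p` one has `ord_π (L_{mn}) = ord_π (L_n)`. -/
theorem stmt_17 {K : Type*} [Field K] (p : ℕ) (hp : p.Prime) (hodd : Odd p) [CharP K p]
    (σ : K ≃+* K) (hσ : ∀ x, σ (σ x) = x)
    (P : Polynomial K) (hP : P ≠ 0)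
    (Pσ : Polynomial K) (hPσ : Pσ = P.map (σ : K →+* K))
    (hne : P ≠ Pσ) (hcop : IsCoprime (P + Pσ) (P * Pσ))
    (L : ℕ → Polynomial K)
    (hL : ∀ n, L n = ∑ i ∈ Finset.range n, P ^ i * Pσ ^ (n - 1 - i))
    (π : Polynomial K) (hπ : Irreducible π) :
    ∀ m n : ℕ, 1 ≤ m → 1 ≤ n → ¬ p ∣ m → ¬ p ∣ n → π ∣ L n →
      multiplicity π (L (m * n)) = multiplicity π (L n) := by
  intro m n hm hn hpm hpn hdvd
  have hπp : Prime π := hπ.prime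
  have hn0 : n ≠ 0 := by omega
  -- basic identity for L
  have hLid : ∀ k : ℕ, L k * (P - Pσ) = P ^ k - Pσ ^ k := by
    intro k
    rw [hL k]
    exact geom_sum₂_mul P Pσ k
  -- the complementary factor
  set M : Polynomial K :=
    ∑ i ∈ Finset.range m, (P ^ n) ^ i * (Pσ ^ n) ^ (m - 1 - i) with hMdef
  have hMid : M * (P ^ n - Pσ ^ n) = P ^ (m * n) - Pσ ^ (m * n) := by
    have := geom_sum₂_mul (P ^ n) (Pσ ^ n) m
    rw [hMdef, this, ← pow_mul, ← pow_mul, Nat.mul_comm n m]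
  -- factorization L (m*n) = L n * M
  have hfactor : L (m * n) = L n * M := by
    have hsub : (P - Pσ) ≠ 0 := sub_ne_zero.mpr hne
    apply mul_right_cancel₀ hsub
    rw [hLid, mul_right_comm, hLid, ← hMid]
    ring
  -- π divides P^n - Pσ^n
  have hdvdPn : π ∣ P ^ n - Pσ ^ n := by
    rw [← hLid n]
    exact hdvd.mul_right _
  -- π does not divide Pσ
  have hnPσ : ¬ π ∣ Pσ := by
    intro h
    have h1 : π ∣ P ^ n := by
      have : π ∣ Pσ ^ n := dvd_pow h hn0
      have := dvd_add hdvdPn this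
      simpa using this
    have h2 : π ∣ P := hπp.dvd_of_dvd_pow h1
    obtain ⟨u, v, huv⟩ := hcop
    have : π ∣ (1 : Polynomial K) := by
      rw [← huv]
      exact dvd_add (Dvd.dvd.mul_left (dvd_add h2 h) u)
        (Dvd.dvd.mul_left (h2.mul_right Pσ) v)
    exact hπ.not_isUnit (isUnit_of_dvd_one this)
  -- π does not divide M
  have hnM : ¬ π ∣ M := by
    intro h
    -- work in the quotient ring
    set I : Ideal (Polynomial K) := Ideal.span {π} with hI
    haveI : I.IsPrime := (Ideal.span_singleton_prime hπp.ne_zero).mpr hπp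
    set φ : Polynomial K →+* Polynomial K ⧸ I := Ideal.Quotient.mk I with hφ
    have hzero : ∀ a : Polynomial K, φ a = 0 ↔ π ∣ a := by
      intro a
      exact Ideal.Quotient.eq_zero_iff_dvd π a
    have hx : φ (P ^ n) = φ (Pσ ^ n) := by
      rw [← sub_eq_zero, ← map_sub, hzero]
      exact hdvdPn
    have hφM : φ M = (m : Polynomial K ⧸ I) * φ (Pσ ^ n) ^ (m - 1) := by
      rw [hMdef, map_sum]
      have : ∀ i ∈ Finset.range m,
          φ ((P ^ n) ^ i * (Pσ ^ n) ^ (m - 1 - i)) = φ (Pσ ^ n) ^ (m - 1) := by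
        intro i hi
        rw [Finset.mem_range] at hi
        have hx' : φ P ^ n = φ Pσ ^ n := by
          rw [← map_pow, ← map_pow]; exact hx
        simp only [map_mul, map_pow]
        rw [hx', ← pow_add]
        congr 1
        omega
      rw [Finset.sum_congr rfl this, Finset.sum_const, Finset.card_range,
        nsmul_eq_mul]
    have hMz : φ M = 0 := (hzero M).mpr h
    rw [hφM] at hMz
    rcases mul_eq_zero.mp hMz with h1 | h2
    · -- m ≠ 0 in the quotient
      have hmK : (m : K) ≠ 0 := by
        rw [Ne, CharP.cast_eq_zero_iff K p m]
        exact hpm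
      have : (m : Polynomial K ⧸ I) = φ (m : Polynomial K) := by
        rw [map_natCast]
      rw [this, hzero] at h1
      have : IsUnit ((m : Polynomial K)) := by
        rw [← Polynomial.C_eq_natCast]
        exact Polynomial.isUnit_C.mpr hmK.isUnit
      exact hπ.not_isUnit (isUnit_of_dvd_unit h1 this)
    · have : φ (Pσ ^ n) ≠ 0 := by
        rw [Ne, hzero]
        intro hd
        exact hnPσ (hπp.dvd_of_dvd_pow hd)
      exact this ((pow_eq_zero_iff'.mp h2).1)
  -- M is nonzero
  have hM0 : M ≠ 0 := by
    intro h0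
    rw [h0] at hnM
    exact hnM (dvd_zero π)
  -- conclude
  by_cases hLn0 : L n = 0
  · rw [hfactor, hLn0, zero_mul]
  · have hfin : FiniteMultiplicity π (L n * M) :=
      FiniteMultiplicity.of_not_isUnit hπ.not_isUnit (mul_ne_zero hLn0 hM0)
    rw [hfactor, multiplicity_mul hπp hfin, multiplicity_eq_zero.mpr hnM, add_zero]
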